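/- Let h : ℕ → ℕ be monotonically increasing and satisfy condition (a). Then the Grundy function of the chocolate bar game satisfies G_h(y,z) = y ⊕ z for all y, z ∈ ℕ with y ≤ h(z). -/

import Mathlib

/-- Condition (a): if `⌊z/2^i⌋ = ⌊z'/2^i⌋` for some `i ≥ 1`,
then `⌊h(z)/2^(i-1)⌋ = ⌊h(z')/2^(i-1)⌋`. -/
def CondA (h : ℕ → ℕ) : Prop :=
  ∀ z z' i : ℕ, 1 ≤ i → z / 2 ^ i = z' / 2 ^ i →
    h z / 2 ^ (i - 1) = h z' / 2 ^ (i - 1)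

/-- The minimum excluded value of a set of natural numbers. -/
noncomputable def mex (S : Set ℕ) : ℕ := sInf {n | n ∉ S}

/-- The Grundy function of the chocolate bar game `CB(f,·,·)`:
`G_f(y,z) = mex({G_f(v,z) : v < y} ∪ {G_f(min(y, f w), w) : w < z})`. -/
noncomputable def grundy (f : ℕ → ℕ) (y z : ℕ) : ℕ :=
  mex ({x | ∃ v, ∃ _ : v < y, x = grundy f v z} ∪
       {x | ∃ w, ∃ _ : w < z, x = grundy f (min y (f w)) w})
termination_by (z, y)

lemma divXor (a b e : ℕ) : (a ^^^ b) / 2^e = (a / 2^e) ^^^ (b / 2^e) := by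
  have h := fun (x : ℕ) => Nat.shiftRight_eq_div_pow x e
  rw [← h, ← h, ← h]
  apply Nat.eq_of_testBit_eq
  intro i
  simp [Nat.testBit_shiftRight, Nat.testBit_xor]

lemma xorLt (a b e : ℕ) : a ^^^ b < 2^e ↔ a / 2^e = b / 2^e := by
  constructor
  · intro hlt
    have h1 : (a ^^^ b) / 2^e = 0 := Nat.div_eq_of_lt hlt
    rw [divXor] at h1
    exact xor_eq_zero_iff.mp h1
  · intro heq
    have h1 : (a ^^^ b) / 2^e = 0 := by rw [divXor, heq, Nat.xor_self]
    have := (Nat.div_eq_zero_iff_lt (by positivity)).mp h1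
    exact this

lemma divSucc (a i : ℕ) : a / 2^i = 2 * (a/2^(i+1)) + (if a.testBit i then 1 else 0) := by
  have h1 : a/2^(i+1) = a/2^i/2 := by
    rw [pow_succ, ← Nat.div_div_eq_div_mul]
  rw [h1, Nat.testBit_eq_decide_div_mod_eq]
  rcases Nat.mod_two_eq_zero_or_one (a / 2^i) with h | h <;> simp [h] <;> omega

lemma bitTrue_of (d i : ℕ) (h1 : 2^i ≤ d) (h2 : d < 2^(i+1)) : d.testBit i = true := by
  have hd : d / 2^i = 1 := by
    have ha : 1 ≤ d / 2^i := (Nat.one_le_div_iff (by positivity)).mpr h1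
    have hb : d / 2^i < 2 := by
      rw [Nat.div_lt_iff_lt_mul (by positivity)]
      rw [pow_succ] at h2; omega
    omega
  rw [Nat.testBit_eq_decide_div_mod_eq, hd]
  simp

lemma lt_of_bits (a b i : ℕ) (hd : a/2^(i+1) = b/2^(i+1))
    (ha : a.testBit i = false) (hb : b.testBit i = true) : a < b := by
  apply Nat.lt_of_div_lt_div (c := 2^i)
  rw [divSucc a i, divSucc b i, ha, hb, hd]
  simp

lemma condA' {h : ℕ → ℕ} (hA : CondA h) (a b e : ℕ) (hlt : a ^^^ b < 2^(e+1)) :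
    h a ^^^ h b < 2^e := by
  rw [xorLt] at hlt ⊢
  have := hA a b (e+1) (by omega) hlt
  simpa using this

lemma xorLC (a b c : ℕ) : a ^^^ (b ^^^ c) = b ^^^ (a ^^^ c) := by
  rw [← Nat.xor_assoc, Nat.xor_comm a b, Nat.xor_assoc]

lemma keyL {h : ℕ → ℕ} (hA : CondA h) :
    ∀ e u w, (h w ^^^ (u ^^^ w)) < 2^(e+1) →
    ∃ w', h w' ^^^ w' = u ∧ w' ^^^ w < 2^(e+1) ∧ h w' ^^^ h w < 2^e := by
  intro e
  induction e with
  | zero =>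
    intro u w hδ
    set w1 := u ^^^ h w with hw1
    have hw1w : w1 ^^^ w = h w ^^^ (u ^^^ w) := by
      simp [hw1, Nat.xor_assoc, Nat.xor_comm, xorLC]
    have heq : h w1 = h w := by
      have := condA' hA w1 w 0 (by rw [hw1w]; exact hδ)
      simpa [Nat.lt_one_iff, xor_eq_zero_iff] using this
    refine ⟨w1, ?_, ?_, ?_⟩
    · rw [heq, hw1]
      simp [Nat.xor_assoc, Nat.xor_comm, xorLC]
    · rw [hw1w]; exact hδ
    · rw [heq]; simp
  | succ e ih =>
    intro u w hδ
    set w1 := u ^^^ h w with hw1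
    have hw1w : w1 ^^^ w = h w ^^^ (u ^^^ w) := by
      simp [hw1, Nat.xor_assoc, Nat.xor_comm, xorLC]
    have hh1 : h w1 ^^^ h w < 2^(e+1) := condA' hA w1 w (e+1) (by rw [hw1w]; exact hδ)
    have hδ1 : h w1 ^^^ (u ^^^ w1) = h w1 ^^^ h w := by
      have huw1 : u ^^^ w1 = h w := by rw [hw1, ← Nat.xor_assoc, Nat.xor_self, Nat.zero_xor]
      rw [huw1]
    obtain ⟨w', hu, hb1, hb2⟩ := ih u w1 (by rw [hδ1]; exact hh1)
    refine ⟨w', hu, ?_, ?_⟩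
    · have heq2 : w' ^^^ w = (w' ^^^ w1) ^^^ (w1 ^^^ w) := by
        simp [Nat.xor_assoc, Nat.xor_comm, xorLC]
      rw [heq2]
      exact Nat.xor_lt_two_pow (lt_trans hb1 (by gcongr <;> norm_num)) (by rw [hw1w]; exact hδ)
    · have heq3 : h w' ^^^ h w = (h w' ^^^ h w1) ^^^ (h w1 ^^^ h w) := by
        simp [Nat.xor_assoc, Nat.xor_comm, xorLC]
      rw [heq3]
      exact Nat.xor_lt_two_pow (lt_trans hb2 (by gcongr <;> norm_num)) hh1

lemma grundy_eq_xor (h : ℕ → ℕ) (hA : CondA h) :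
    ∀ z y, y ≤ h z → grundy h y z = y ^^^ z := by
  intro z
  induction z using Nat.strong_induction_on with
  | _ z ihz =>
  intro y
  induction y using Nat.strong_induction_on with
  | _ y ihy =>
  intro hyz
  rw [grundy]
  set S := ({x | ∃ v, ∃ _ : v < y, x = grundy h v z} ∪
       {x | ∃ w, ∃ _ : w < z, x = grundy h (min y (h w)) w}) with hSdef
  have hmem : ∀ u, u ∈ S ↔ ((∃ v, v < y ∧ u = v ^^^ z) ∨
      (∃ w, w < z ∧ u = (min y (h w)) ^^^ w)) := by
    intro u
    simp only [hSdef, Set.mem_union, Set.mem_setOf_eq, exists_prop]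
    constructor
    · rintro (⟨v, hv, rfl⟩ | ⟨w, hw, rfl⟩)
      · exact Or.inl ⟨v, hv, ihy v hv (hv.le.trans hyz)⟩
      · exact Or.inr ⟨w, hw, ihz w hw (min y (h w)) (min_le_right _ _)⟩
    · rintro (⟨v, hv, rfl⟩ | ⟨w, hw, rfl⟩)
      · exact Or.inl ⟨v, hv, (ihy v hv (hv.le.trans hyz)).symm⟩
      · exact Or.inr ⟨w, hw, (ihz w hw (min y (h w)) (min_le_right _ _)).symm⟩
  -- Part 1 : y ^^^ z is not a value of any option
  have key1 : (y ^^^ z) ∉ S := by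
    rw [hmem]
    rintro (⟨v, hv, he⟩ | ⟨w, hw, he⟩)
    · have h2 : (y ^^^ z) ^^^ z = (v ^^^ z) ^^^ z := by rw [he]
      simp only [Nat.xor_assoc, Nat.xor_self, Nat.xor_zero] at h2
      omega
    · rcases le_total y (h w) with hc | hc
      · rw [min_eq_left hc] at he
        have h2 : y ^^^ (y ^^^ z) = y ^^^ (y ^^^ w) := by rw [he]
        simp only [← Nat.xor_assoc, Nat.xor_self, Nat.zero_xor] at h2
        omega
      · rw [min_eq_right hc] at he
        rcases eq_or_lt_of_le hc with hceq | hclt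
        · rw [hceq] at he
          have h2 : y ^^^ (y ^^^ z) = y ^^^ (y ^^^ w) := by rw [he]
          simp only [← Nat.xor_assoc, Nat.xor_self, Nat.zero_xor] at h2
          omega
        -- now h w < y and  y ^^^ z = h w ^^^ w
        have hd0 : z ^^^ w ≠ 0 := by
          intro h0; exact absurd (xor_eq_zero_iff.mp h0) (by omega)
        set i := Nat.log 2 (z ^^^ w) with hidef
        have hi1 : 2^i ≤ z ^^^ w := Nat.pow_log_le_self 2 hd0
        have hi2 : z ^^^ w < 2^(i+1) := Nat.lt_pow_succ_log_self (by norm_num) _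
        have hhzw : h z / 2^i = h w / 2^i := (xorLt _ _ _).mp (condA' hA z w i hi2)
        have h3 : (h w ^^^ y) ^^^ (z ^^^ w) = (y ^^^ z) ^^^ (h w ^^^ w) := by
          simp [Nat.xor_assoc, Nat.xor_comm, xorLC]
        rw [he, Nat.xor_self] at h3
        have h4 : h w ^^^ y = z ^^^ w := xor_eq_zero_iff.mp h3
        have hne : h w / 2^i ≠ y / 2^i := by
          intro heq
          have := (xorLt (h w) y i).mpr heq
          omega
        have hlt2 : h w / 2^i < y / 2^i := by
          rcases lt_trichotomy (h w / 2^i) (y / 2^i) with hh | hh | hh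
          · exact hh
          · exact absurd hh hne
          · exact absurd (Nat.lt_of_div_lt_div hh) (by omega)
        have := Nat.div_le_div_right (c := 2^i) hyz
        omega
  -- Part 2 : every u < y ^^^ z is a value of some option
  have key2 : ∀ u, u < y ^^^ z → u ∈ S := by
    intro u hu
    have hd0 : u ^^^ (y ^^^ z) ≠ 0 := by
      intro h0; exact absurd (xor_eq_zero_iff.mp h0) (by omega)
    set i := Nat.log 2 (u ^^^ (y ^^^ z)) with hidef
    have hi1 : 2^i ≤ u ^^^ (y ^^^ z) := Nat.pow_log_le_self 2 hd0
    have hi2 : u ^^^ (y ^^^ z) < 2^(i+1) := Nat.lt_pow_succ_log_self (by norm_num) _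
    have hdiv : u / 2^(i+1) = (y ^^^ z) / 2^(i+1) := (xorLt _ _ _).mp hi2
    have hne : u / 2^i ≠ (y ^^^ z) / 2^i := by
      intro heq
      have := (xorLt u (y ^^^ z) i).mpr heq
      omega
    have hult : u / 2^i < (y ^^^ z) / 2^i := by
      rcases lt_trichotomy (u / 2^i) ((y ^^^ z) / 2^i) with hh | hh | hh
      · exact hh
      · exact absurd hh hne
      · exact absurd (Nat.lt_of_div_lt_div hh) (by omega)
    have e1 := divSucc u i
    have e2 := divSucc (y ^^^ z) i
    have hub : u.testBit i = false := by
      cases hbu : u.testBit i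
      · rfl
      · exfalso
        rw [hbu] at e1
        simp at e1
        have hb2 : (y ^^^ z) / 2^i ≤ 2 * ((y ^^^ z) / 2^(i+1)) + 1 := by
          rw [e2]; split <;> omega
        omega
    have hxb : (y ^^^ z).testBit i = true := by
      cases hbx : (y ^^^ z).testBit i
      · exfalso
        rw [hbx] at e2
        simp at e2
        have hb0 : 2 * (u / 2^(i+1)) ≤ u / 2^i := by
          rw [e1]; split <;> omega
        omega
      · rfl
    have hyzbit : ((y.testBit i) ^^ (z.testBit i)) = true := by
      rw [← Nat.testBit_xor]; exact hxb
    rw [hmem]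
    cases hyb : y.testBit i with
    | true =>
      -- move in the first coordinate
      set v := u ^^^ z with hvdef
      have hvz : v ^^^ z = u := by
        rw [hvdef, Nat.xor_assoc, Nat.xor_self, Nat.xor_zero]
      have hzb : z.testBit i = false := by
        cases hzb' : z.testBit i
        · rfl
        · rw [hyb, hzb'] at hyzbit; simp at hyzbit
      have hvy : v ^^^ y = u ^^^ (y ^^^ z) := by
        rw [hvdef]
        simp [Nat.xor_assoc, Nat.xor_comm, xorLC]
      have hdiv2 : v / 2^(i+1) = y / 2^(i+1) := by
        apply (xorLt _ _ _).mp
        rw [hvy]; exact hi2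
      have hvb : v.testBit i = false := by
        rw [hvdef, Nat.testBit_xor, hub, hzb]; rfl
      exact Or.inl ⟨v, lt_of_bits v y i hdiv2 hvb hyb, hvz.symm⟩
    | false =>
      have hzb : z.testBit i = true := by
        cases hzb' : z.testBit i
        · rw [hyb, hzb'] at hyzbit; simp at hyzbit
        · rfl
      set w0 := u ^^^ y with hw0def
      have hw0z : w0 ^^^ z = u ^^^ (y ^^^ z) := by
        rw [hw0def]; simp [Nat.xor_assoc]
      have hw0b : w0.testBit i = false := by
        rw [hw0def, Nat.testBit_xor, hub, hyb]; rfl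
      have hdivw : w0 / 2^(i+1) = z / 2^(i+1) := by
        apply (xorLt _ _ _).mp
        rw [hw0z]; exact hi2
      have hw0lt : w0 < z := lt_of_bits w0 z i hdivw hw0b hzb
      have huyw0 : y ^^^ w0 = u := by
        rw [hw0def, xorLC, Nat.xor_self, Nat.xor_zero]
      by_cases hyw : y ≤ h w0
      · exact Or.inr ⟨w0, hw0lt, by rw [min_eq_left hyw, huyw0]⟩
      push_neg at hyw
      -- the delicate case : h w0 < y
      have hzw0 : z ^^^ w0 < 2^(i+1) := by rw [Nat.xor_comm, hw0z]; exact hi2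
      have hhzd : h z / 2^i = h w0 / 2^i := (xorLt _ _ _).mp (condA' hA z w0 i hzw0)
      have hyd : y / 2^i ≤ h w0 / 2^i := by
        have := Nat.div_le_div_right (c := 2^i) hyz
        omega
      have hwyd : h w0 / 2^i ≤ y / 2^i := Nat.div_le_div_right hyw.le
      have hδsm : h w0 ^^^ y < 2^i := (xorLt _ _ _).mpr (le_antisymm hwyd hyd)
      have hδ0 : h w0 ^^^ y ≠ 0 := by
        intro h0; exact absurd (xor_eq_zero_iff.mp h0) (by omega)
      set j := Nat.log 2 (h w0 ^^^ y) with hjdef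
      have hj1 : 2^j ≤ h w0 ^^^ y := Nat.pow_log_le_self 2 hδ0
      have hj2 : h w0 ^^^ y < 2^(j+1) := Nat.lt_pow_succ_log_self (by norm_num) _
      have hji : j < i := by
        have : (2:ℕ)^j < 2^i := lt_of_le_of_lt hj1 hδsm
        exact (Nat.pow_lt_pow_iff_right (by norm_num)).mp this
      have huw0 : u ^^^ w0 = y := by
        rw [hw0def, ← Nat.xor_assoc, Nat.xor_self, Nat.zero_xor]
      obtain ⟨w', hw'u, hb1, hb2⟩ := keyL hA j u w0 (by rw [huw0]; exact hj2)
      -- h w' < y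
      have hdivj : h w' / 2^j = h w0 / 2^j := (xorLt _ _ _).mp hb2
      have hne2 : h w0 / 2^j ≠ y / 2^j := by
        intro heq
        have := (xorLt (h w0) y j).mpr heq
        omega
      have hlt3 : h w0 / 2^j < y / 2^j := by
        rcases lt_trichotomy (h w0 / 2^j) (y / 2^j) with hh | hh | hh
        · exact hh
        · exact absurd hh hne2
        · exact absurd (Nat.lt_of_div_lt_div hh) (by omega)
      have hw'y : h w' < y := Nat.lt_of_div_lt_div (a := h w') (c := 2^j) (by omega)
      -- w' < z
      have hww0 : w' ^^^ w0 < 2^i :=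
        lt_of_lt_of_le hb1 (Nat.pow_le_pow_right (by norm_num) (by omega))
      have hw'zx : w' ^^^ z = (w' ^^^ w0) ^^^ (w0 ^^^ z) := by
        simp [Nat.xor_assoc, Nat.xor_comm, xorLC]
      have hdivz : w' / 2^(i+1) = z / 2^(i+1) := by
        apply (xorLt _ _ _).mp
        rw [hw'zx]
        exact Nat.xor_lt_two_pow
          (lt_of_lt_of_le hww0 (Nat.pow_le_pow_right (by norm_num) (by omega)))
          (by rw [hw0z]; exact hi2)
      have hdd : w' / 2^i = w0 / 2^i := (xorLt _ _ _).mp hww0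
      have hw'b : w'.testBit i = false := by
        rw [Nat.testBit_eq_decide_div_mod_eq, hdd, ← Nat.testBit_eq_decide_div_mod_eq]
        exact hw0b
      have hw'z : w' < z := lt_of_bits w' z i hdivz hw'b hzb
      exact Or.inr ⟨w', hw'z, by rw [min_eq_right hw'y.le, hw'u]⟩
  -- combine via mex
  show mex S = y ^^^ z
  rw [mex]
  apply le_antisymm
  · exact Nat.sInf_le key1
  · refine le_csInf ⟨y ^^^ z, key1⟩ ?_
    intro b hb
    by_contra hlt
    push_neg at hlt
    exact hb (key2 b hlt)

theorem stmt_7 (h : ℕ → ℕ) (hmono : Monotone h) (hA : CondA h)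
    (y z : ℕ) (hyz : y ≤ h z) :
    grundy h y z = y ^^^ z :=
  grundy_eq_xor h hA z y hyz
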